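/- Let α > 0, let (a_i)_{i≥1} be a sequence with 0 < a_i < 1, Σ a_i^k < ∞ and Σ a_i^k |ln a_i|^{k-1} = ∞ for some k ≥ 2, and let (M_i)_{i≥1} be i.i.d. standard α-Fréchet random variables. Then ⋁_{i≥1} a_i^{k/α} M_{ki} M_{ki+1} ⋯ M_{ki+k-1} = ∞ almost surely. -/

import Mathlib

open MeasureTheory Filter ProbabilityTheory

lemma auxexp1 (u : ℝ) (h0 : 0 ≤ u) (h1 : u ≤ 1) : u / 2 ≤ 1 - Real.exp (-u) := by
  have h := Real.add_one_le_exp u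
  have he : Real.exp (-u) * Real.exp u = 1 := by rw [← Real.exp_add]; simp
  nlinarith [Real.exp_pos (-u), Real.exp_pos u]

lemma auxexp2 (r u : ℝ) (hr1 : r < 1) (hu0 : 0 < u) (hu1 : u ≤ 1) :
    Real.exp (-1) * (1 - r) * u ≤ Real.exp (-(r * u)) - Real.exp (-u) := by
  have h1 : Real.exp (-1) ≤ Real.exp (-u) := Real.exp_le_exp.2 (by linarith)
  have h2 : (1 - r) * u ≤ Real.exp ((1 - r) * u) - 1 := by
    linarith [Real.add_one_le_exp ((1 - r) * u)]
  have key : Real.exp (-(r * u)) - Real.exp (-u) = Real.exp (-u) * (Real.exp ((1 - r) * u) - 1) := by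
    rw [mul_sub, ← Real.exp_add]; ring_nf
  rw [key]
  have := mul_le_mul h1 h2 (by nlinarith) (Real.exp_pos (-u)).le
  nlinarith

lemma exp_rpow' (s t : ℝ) : (Real.exp s) ^ t = Real.exp (s * t) := by
  rw [Real.rpow_def_of_pos (Real.exp_pos s), Real.log_exp]

section
variable {Ω : Type*} [MeasurableSpace Ω] {P : Measure Ω} [IsProbabilityMeasure P]
  {α : ℝ} {X : Ω → ℝ}

lemma ioc_bound (hα : 0 < α) (hX : Measurable X)
    (hF : ∀ x : ℝ, 0 < x → P {ω | X ω ≤ x} = ENNReal.ofReal (Real.exp (-(x ^ (-α))))) (m : ℕ) :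
    ENNReal.ofReal (Real.exp (-1) * (1 - Real.exp (-α)) * Real.exp (-(α * m))) ≤
      P (X ⁻¹' Set.Ioc (Real.exp m) (Real.exp (m + 1))) := by
  have hab : Real.exp (m : ℝ) ≤ Real.exp ((m : ℝ) + 1) := Real.exp_le_exp.2 (by linarith)
  have hsplit : P (X ⁻¹' Set.Iic (Real.exp m)) + P (X ⁻¹' Set.Ioc (Real.exp m) (Real.exp (m + 1)))
      = P (X ⁻¹' Set.Iic (Real.exp ((m : ℝ) + 1))) := by
    rw [← measure_union ((Set.Iic_disjoint_Ioc le_rfl).preimage X) (hX measurableSet_Ioc),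
      ← Set.preimage_union, Set.Iic_union_Ioc_eq_Iic hab]
  have hIic : ∀ y : ℝ, 0 < y → P (X ⁻¹' Set.Iic y) = ENNReal.ofReal (Real.exp (-(y ^ (-α)))) :=
    fun y hy => hF y hy
  have hpow : ∀ s : ℝ, (Real.exp s) ^ (-α) = Real.exp (-(α * s)) := fun s => by
    rw [exp_rpow']; ring_nf
  set u : ℝ := Real.exp (-(α * m)) with hu
  set r : ℝ := Real.exp (-α) with hr
  have hu1 : u ≤ 1 := Real.exp_le_one_iff.2 (neg_nonpos.2 (by positivity))
  have hrlt : r < 1 := Real.exp_lt_one_iff.2 (by linarith)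
  have hru : Real.exp (-(α * ((m : ℝ) + 1))) = r * u := by rw [hr, hu, ← Real.exp_add]; ring_nf
  have hkey : Real.exp (-u) + Real.exp (-1) * (1 - r) * u ≤ Real.exp (-(r * u)) := by
    have := auxexp2 r u hrlt (Real.exp_pos _) hu1
    linarith
  have h1 : P (X ⁻¹' Set.Iic (Real.exp ((m : ℝ) + 1))) = ENNReal.ofReal (Real.exp (-(r * u))) := by
    rw [hIic _ (Real.exp_pos _), hpow, hru]
  have h2 : P (X ⁻¹' Set.Iic (Real.exp (m : ℝ))) = ENNReal.ofReal (Real.exp (-u)) := by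
    rw [hIic _ (Real.exp_pos _), hpow]
  have hle : P (X ⁻¹' Set.Iic (Real.exp (m:ℝ))) + ENNReal.ofReal (Real.exp (-1) * (1 - r) * u) ≤
      P (X ⁻¹' Set.Iic (Real.exp (m:ℝ))) + P (X ⁻¹' Set.Ioc (Real.exp m) (Real.exp (m + 1))) := by
    rw [hsplit, h1, h2, ← ENNReal.ofReal_add (Real.exp_pos _).le]
    · exact ENNReal.ofReal_le_ofReal hkey
    · exact mul_nonneg (mul_nonneg (Real.exp_pos _).le (by linarith)) (Real.exp_pos _).le
  exact (ENNReal.add_le_add_iff_left (measure_ne_top P _)).1 hle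

lemma ioi_bound (hα : 0 < α) (hX : Measurable X)
    (hF : ∀ x : ℝ, 0 < x → P {ω | X ω ≤ x} = ENNReal.ofReal (Real.exp (-(x ^ (-α)))))
    {y : ℝ} (hy : 1 ≤ y) :
    ENNReal.ofReal (y ^ (-α) / 2) ≤ P (X ⁻¹' Set.Ioi y) := by
  have hy0 : 0 < y := by linarith
  have hsplit : P (X ⁻¹' Set.Iic y) + P (X ⁻¹' Set.Ioi y) = 1 := by
    rw [← measure_union ((Set.Iic_disjoint_Ioi le_rfl).preimage X) (hX measurableSet_Ioi),
      ← Set.preimage_union, Set.Iic_union_Ioi, Set.preimage_univ, measure_univ]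
  have hu0 : 0 < y ^ (-α) := Real.rpow_pos_of_pos hy0 _
  have hu1 : y ^ (-α) ≤ 1 := Real.rpow_le_one_of_one_le_of_nonpos hy (by linarith)
  have hkey : Real.exp (-(y ^ (-α))) + y ^ (-α) / 2 ≤ 1 := by
    have := auxexp1 (y ^ (-α)) hu0.le hu1; linarith
  have hle : P (X ⁻¹' Set.Iic y) + ENNReal.ofReal (y ^ (-α) / 2) ≤
      P (X ⁻¹' Set.Iic y) + P (X ⁻¹' Set.Ioi y) := by
    have hset : X ⁻¹' Set.Iic y = {ω | X ω ≤ y} := rfl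
    rw [hsplit, hset, hF y hy0, ← ENNReal.ofReal_add (Real.exp_pos _).le (by positivity), ←
      ENNReal.ofReal_one]
    exact ENNReal.ofReal_le_ofReal hkey
  exact (ENNReal.add_le_add_iff_left (measure_ne_top P _)).1 hle

end

section
variable {Ω : Type*} [MeasurableSpace Ω] {P : Measure Ω}
variable {k : ℕ} {M : ℕ → Ω → ℝ}

/-- the `i`-th block of indices -/
def blockF (k i : ℕ) : Finset ℕ := (Finset.range k).image (fun t => k * i + t)

lemma blockF_div (hk : 0 < k) {i t : ℕ} (ht : t < k) : (k * i + t) / k = i := by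
  rw [Nat.mul_add_div hk, Nat.div_eq_of_lt ht, add_zero]

lemma blockF_mod {i t : ℕ} (ht : t < k) : (k * i + t) % k = t := by
  rw [Nat.mul_add_mod, Nat.mod_eq_of_lt ht]

lemma blockF_disj (hk : 0 < k) : (Set.univ : Set ℕ).PairwiseDisjoint (blockF k) := by
  intro i _ i' _ hne
  simp only [Function.onFun]
  rw [Finset.disjoint_left]
  rintro j hj hj'
  simp only [blockF, Finset.mem_image, Finset.mem_range] at hj hj'
  obtain ⟨t, ht, rfl⟩ := hj
  obtain ⟨t', ht', he⟩ := hj'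
  apply hne
  have h1 : (k * i + t) / k = i := blockF_div hk ht
  have h2 : (k * i' + t') / k = i' := blockF_div hk ht'
  rw [← h1, ← he, h2]

lemma biInter_blockF (i : ℕ) (g : ℕ → Set Ω) :
    ⋂ j ∈ blockF k i, g j = ⋂ t ∈ Finset.range k, g (k * i + t) :=
  Finset.set_biInter_finset_image

lemma prod_blockF (i : ℕ) (g : ℕ → ENNReal) :
    ∏ j ∈ blockF k i, g j = ∏ t ∈ Finset.range k, g (k * i + t) :=
  (Finset.prod_image (fun a _ b _ h => by omega))

lemma block_prod (hk : 0 < k) (hindep : iIndepFun M P)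
    (i : ℕ) (s : ℕ → Set ℝ) (hs : ∀ t, MeasurableSet (s t)) :
    P (⋂ t ∈ Finset.range k, M (k * i + t) ⁻¹' s t)
      = ∏ t ∈ Finset.range k, P (M (k * i + t) ⁻¹' s t) := by
  have h := hindep.measure_inter_preimage_eq_mul (blockF k i) (sets := fun j => s (j % k))
    (fun j _ => hs _)
  rw [biInter_blockF, prod_blockF] at h
  calc P (⋂ t ∈ Finset.range k, M (k * i + t) ⁻¹' s t)
      = P (⋂ t ∈ Finset.range k, M (k * i + t) ⁻¹' s ((k * i + t) % k)) := by
        refine congrArg P (Set.iInter_congr fun t => Set.iInter_congr fun ht => ?_)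
        rw [blockF_mod (Finset.mem_range.1 ht)]
    _ = ∏ t ∈ Finset.range k, P (M (k * i + t) ⁻¹' s ((k * i + t) % k)) := h
    _ = _ := Finset.prod_congr rfl fun t ht => by rw [blockF_mod (Finset.mem_range.1 ht)]

lemma group_prod (hk : 0 < k) (hindep : iIndepFun M P)
    (S : Finset ℕ) (s : ℕ → ℕ → Set ℝ) (hs : ∀ i t, MeasurableSet (s i t)) :
    P (⋂ i ∈ S, ⋂ t ∈ Finset.range k, M (k * i + t) ⁻¹' s i t)
      = ∏ i ∈ S, P (⋂ t ∈ Finset.range k, M (k * i + t) ⁻¹' s i t) := by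
  classical
  set sets : ℕ → Set ℝ := fun j => s (j / k) (j % k) with hsets
  have h1 : ∀ i, (⋂ j ∈ blockF k i, M j ⁻¹' sets j)
      = ⋂ t ∈ Finset.range k, M (k * i + t) ⁻¹' s i t := by
    intro i
    rw [biInter_blockF]
    refine Set.iInter_congr fun t => Set.iInter_congr fun ht => ?_
    rw [hsets]
    simp only
    rw [blockF_mod (Finset.mem_range.1 ht), blockF_div hk (Finset.mem_range.1 ht)]
  have h2 : ∀ i, (∏ j ∈ blockF k i, P (M j ⁻¹' sets j))
      = ∏ t ∈ Finset.range k, P (M (k * i + t) ⁻¹' s i t) := by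
    intro i
    rw [prod_blockF]
    refine Finset.prod_congr rfl fun t ht => ?_
    rw [hsets]
    simp only
    rw [blockF_mod (Finset.mem_range.1 ht), blockF_div hk (Finset.mem_range.1 ht)]
  calc P (⋂ i ∈ S, ⋂ t ∈ Finset.range k, M (k * i + t) ⁻¹' s i t)
      = P (⋂ j ∈ S.biUnion (blockF k), M j ⁻¹' sets j) := by
        rw [Finset.set_biInter_biUnion]
        exact congrArg P (Set.iInter_congr fun i => Set.iInter_congr fun hi => (h1 i).symm)
    _ = ∏ j ∈ S.biUnion (blockF k), P (M j ⁻¹' sets j) :=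
        hindep.measure_inter_preimage_eq_mul _ (fun j _ => hs _ _)
    _ = ∏ i ∈ S, ∏ j ∈ blockF k i, P (M j ⁻¹' sets j) :=
        Finset.prod_biUnion ((blockF_disj hk).subset (Set.subset_univ _))
    _ = ∏ i ∈ S, P (⋂ t ∈ Finset.range k, M (k * i + t) ⁻¹' s i t) := by
        refine Finset.prod_congr rfl fun i _ => ?_
        rw [h2 i, ← block_prod hk hindep i (fun t => s i t) (hs i)]

/-- block σ-algebras -/
def mBlock (k : ℕ) (M : ℕ → Ω → ℝ) (i : ℕ) : MeasurableSpace Ω :=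
  MeasurableSpace.comap (fun ω (t : Fin k) => M (k * i + (t : ℕ)) ω) MeasurableSpace.pi

/-- block rectangle π-systems -/
def piBlock (k : ℕ) (M : ℕ → Ω → ℝ) (i : ℕ) : Set (Set Ω) :=
  {A | ∃ s : ℕ → Set ℝ, (∀ t, MeasurableSet (s t)) ∧
    A = ⋂ t ∈ Finset.range k, M (k * i + t) ⁻¹' s t}

lemma isPiSystem_piBlock (i : ℕ) : IsPiSystem (piBlock k M i) := by
  rintro A ⟨s, hs, rfl⟩ B ⟨s', hs', rfl⟩ -
  refine ⟨fun t => s t ∩ s' t, fun t => (hs t).inter (hs' t), ?_⟩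
  ext ω
  simp only [Set.mem_inter_iff, Set.mem_iInter, Set.mem_preimage]
  exact ⟨fun h t ht => ⟨h.1 t ht, h.2 t ht⟩,
    fun h => ⟨fun t ht => (h t ht).1, fun t ht => (h t ht).2⟩⟩

lemma measurable_mBlock (i : ℕ) {t : ℕ} (ht : t < k) :
    Measurable[mBlock k M i] (M (k * i + t)) := by
  have hg : Measurable[mBlock k M i] (fun ω (t : Fin k) => M (k * i + (t : ℕ)) ω) :=
    measurable_iff_comap_le.2 le_rfl
  exact (measurable_pi_apply (⟨t, ht⟩ : Fin k)).comp hg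

lemma mBlock_eq (hk : 0 < k) (i : ℕ) :
    mBlock k M i = MeasurableSpace.generateFrom (piBlock k M i) := by
  refine le_antisymm ?_ ?_
  · unfold mBlock
    have hpi : (MeasurableSpace.pi : MeasurableSpace (Fin k → ℝ))
        = ⨆ t : Fin k, MeasurableSpace.comap (fun v : Fin k → ℝ => v t) inferInstance := rfl
    rw [hpi, MeasurableSpace.comap_iSup]
    refine iSup_le fun t => ?_
    rw [MeasurableSpace.comap_comp, ← measurable_iff_comap_le]
    intro s hs
    refine MeasurableSpace.measurableSet_generateFrom ?_
    refine ⟨fun t' => if t' = (t : ℕ) then s else Set.univ, fun t' => ?_, ?_⟩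
    · by_cases he : t' = (t : ℕ) <;> simp [he, hs]
    ext ω
    simp only [Set.mem_preimage, Set.mem_iInter, Finset.mem_range]
    constructor
    · intro h t' ht'
      by_cases he : t' = (t : ℕ)
      · subst he; simpa using h
      · simp [he]
    · intro h
      have := h (t : ℕ) t.isLt
      simpa using this
  · refine MeasurableSpace.generateFrom_le ?_
    rintro A ⟨s, hs, rfl⟩
    refine MeasurableSpace.measurableSet_comap.2
      ⟨⋂ t : Fin k, (fun v : Fin k → ℝ => v t) ⁻¹' s (t : ℕ),
        MeasurableSet.iInter fun t => measurable_pi_apply t (hs _), ?_⟩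
    ext ω
    simp only [Set.mem_preimage, Set.mem_iInter, Finset.mem_range]
    constructor
    · intro h t' ht'
      exact h ⟨t', ht'⟩
    · intro h t
      exact h (t : ℕ) t.isLt

lemma iIndep_mBlock (hk : 0 < k) (hmeas : ∀ i, Measurable (M i))
    (hindep : iIndepFun M P) :
    iIndep (mBlock k M) P := by
  have hle : ∀ i, mBlock k M i ≤ ‹MeasurableSpace Ω› := by
    intro i
    exact Measurable.comap_le (measurable_pi_iff.2 fun t => hmeas _)
  refine iIndepSets.iIndep (m := mBlock k M) hle (piBlock k M)
    (fun i => isPiSystem_piBlock (k := k) (M := M) i) (fun i => mBlock_eq hk i) ?_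
  rw [iIndepSets_iff]
  intro S f hf
  have hch : ∀ i, ∃ s : ℕ → Set ℝ, (∀ t, MeasurableSet (s t)) ∧
      (i ∈ S → f i = ⋂ t ∈ Finset.range k, M (k * i + t) ⁻¹' s t) := by
    intro i
    by_cases hi : i ∈ S
    · obtain ⟨s, hs, he⟩ := hf i hi
      exact ⟨s, hs, fun _ => he⟩
    · exact ⟨fun _ => Set.univ, fun _ => MeasurableSet.univ, fun h => absurd h hi⟩
  choose s hs hfe using hch
  calc P (⋂ i ∈ S, f i)
      = P (⋂ i ∈ S, ⋂ t ∈ Finset.range k, M (k * i + t) ⁻¹' s i t) :=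
        congrArg P (Set.iInter_congr fun i => Set.iInter_congr fun hi => hfe i hi)
    _ = ∏ i ∈ S, P (⋂ t ∈ Finset.range k, M (k * i + t) ⁻¹' s i t) :=
        group_prod hk hindep S s hs
    _ = ∏ i ∈ S, P (f i) :=
        Finset.prod_congr rfl fun i hi => by rw [hfe i hi]

end

section MainBound
variable {Ω : Type*} [MeasurableSpace Ω] {P : Measure Ω} [IsProbabilityMeasure P]
  {α : ℝ} {M : ℕ → Ω → ℝ}

lemma main_bound (hα : 0 < α) {k q : ℕ} (hkq : k = q + 1) (hq : 1 ≤ q)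
    (hmeas : ∀ i, Measurable (M i))
    (hindep : iIndepFun M P)
    (hfrechet : ∀ j, ∀ x : ℝ, 0 < x →
      P {ω | M j ω ≤ x} = ENNReal.ofReal (Real.exp (-(x ^ (-α)))))
    (i n : ℕ) {x : ℝ} (hx : 1 ≤ x) (hn : (q : ℝ) * n ≤ Real.log x) :
    ENNReal.ofReal ((Real.exp (-1) * (1 - Real.exp (-α))) ^ q / 2 * x ^ (-α) * (n : ℝ) ^ q)
      ≤ P {ω | x < ∏ t ∈ Finset.range k, M (k * i + t) ω} := by
  classical
  have hk0 : 0 < k := by omega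
  have hx0 : (0 : ℝ) < x := by linarith
  set c₁ : ℝ := Real.exp (-1) * (1 - Real.exp (-α)) with hc₁
  set W : (Fin q → Fin n) → ℕ → ℕ := fun v t => if h : t < q then (v ⟨t, h⟩ : ℕ) else 0 with hW
  set Sv : (Fin q → Fin n) → ℝ := fun v => ∑ u ∈ Finset.range q, (W v u : ℝ) with hSv
  set sv : (Fin q → Fin n) → ℕ → Set ℝ := fun v t =>
    if t < q then Set.Ioc (Real.exp (W v t)) (Real.exp (W v t + 1))
    else Set.Ioi (x * Real.exp (-Sv v)) with hsv
  set E : (Fin q → Fin n) → Set Ω := fun v => ⋂ t ∈ Finset.range k, M (k * i + t) ⁻¹' sv v t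
    with hE
  have hsv_meas : ∀ v t, MeasurableSet (sv v t) := by
    intro v t
    rw [hsv]
    dsimp only
    split
    · exact measurableSet_Ioc
    · exact measurableSet_Ioi
  have hE_meas : ∀ v, MeasurableSet (E v) := fun v =>
    Finset.measurableSet_biInter _ fun t _ => (hmeas _) (hsv_meas v t)
  have hWlt : ∀ (v : Fin q → Fin n) {t : ℕ}, t < q → W v t < n := by
    intro v t ht
    rw [hW]
    simp only [ht, dif_pos]
    exact (v ⟨t, ht⟩).isLt
  have hqk : q < k := by omega
  have hS_le : ∀ v, Sv v ≤ Real.log x := by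
    intro v
    rw [hSv]
    calc ∑ u ∈ Finset.range q, (W v u : ℝ)
        ≤ ∑ _u ∈ Finset.range q, (n : ℝ) := by
          refine Finset.sum_le_sum fun u hu => ?_
          exact_mod_cast (hWlt v (Finset.mem_range.1 hu)).le
      _ = (q : ℝ) * n := by rw [Finset.sum_const, Finset.card_range, nsmul_eq_mul]
      _ ≤ Real.log x := hn
  have hy1 : ∀ v, 1 ≤ x * Real.exp (-Sv v) := by
    intro v
    have h1 : Real.exp (-Real.log x) ≤ Real.exp (-Sv v) :=
      Real.exp_le_exp.2 (neg_le_neg (hS_le v))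
    have h2 : Real.exp (-Real.log x) = x⁻¹ := by rw [Real.exp_neg, Real.exp_log hx0]
    calc (1 : ℝ) = x * x⁻¹ := by field_simp
      _ = x * Real.exp (-Real.log x) := by rw [h2]
      _ ≤ x * Real.exp (-Sv v) := by
          exact mul_le_mul_of_nonneg_left h1 hx0.le
  -- each E v is contained in the target event
  have hsub : ∀ v, E v ⊆ {ω | x < ∏ t ∈ Finset.range k, M (k * i + t) ω} := by
    intro v ω hω
    have hmem : ∀ t, t ∈ Finset.range k → M (k * i + t) ω ∈ sv v t := by
      rw [hE] at hω
      simpa only [Set.mem_iInter, Set.mem_preimage] using hω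
    have hlast : x * Real.exp (-Sv v) < M (k * i + q) ω := by
      have := hmem q (Finset.mem_range.2 hqk)
      rw [hsv] at this
      simpa only [lt_self_iff_false, if_false, Set.mem_Ioi] using this
    have hrest : ∀ t, t ∈ Finset.range q → Real.exp (W v t) < M (k * i + t) ω := by
      intro t ht
      have htq := Finset.mem_range.1 ht
      have := hmem t (Finset.mem_range.2 (lt_trans htq hqk))
      rw [hsv] at this
      simp only [htq, if_true, Set.mem_Ioc] at this
      exact this.1
    have h1 : Real.exp (Sv v) ≤ ∏ t ∈ Finset.range q, M (k * i + t) ω := by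
      rw [hSv]
      simp only
      rw [Real.exp_sum]
      exact Finset.prod_le_prod (fun t _ => (Real.exp_pos _).le)
        (fun t ht => (hrest t ht).le)
    have hkey : Real.exp (Sv v) * (x * Real.exp (-Sv v))
        < (∏ t ∈ Finset.range q, M (k * i + t) ω) * M (k * i + q) ω :=
      mul_lt_mul' h1 hlast (by positivity) (lt_of_lt_of_le (Real.exp_pos _) h1)
    have hid : Real.exp (Sv v) * (x * Real.exp (-Sv v)) = x := by
      rw [show Real.exp (Sv v) * (x * Real.exp (-Sv v))
          = x * (Real.exp (-Sv v) * Real.exp (Sv v)) from by ring,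
        ← Real.exp_add, neg_add_cancel, Real.exp_zero, mul_one]
    show x < ∏ t ∈ Finset.range k, M (k * i + t) ω
    rw [show Finset.range k = Finset.range (q + 1) from by rw [hkq],
      Finset.prod_range_succ]
    rw [hid] at hkey
    exact hkey
  -- the E v are pairwise disjoint
  have claim : ∀ v v' : Fin q → Fin n, ∀ u : Fin q, W v u < W v' u → Disjoint (E v) (E v') := by
    intro v v' u hlt
    rw [Set.disjoint_left]
    intro ω hv hv'
    have huk : (u : ℕ) ∈ Finset.range k := Finset.mem_range.2 (lt_trans u.isLt hqk)
    have h1 : M (k * i + u) ω ∈ sv v u := by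
      rw [hE] at hv
      simp only [Set.mem_iInter, Set.mem_preimage] at hv
      exact hv u huk
    have h2 : M (k * i + u) ω ∈ sv v' u := by
      rw [hE] at hv'
      simp only [Set.mem_iInter, Set.mem_preimage] at hv'
      exact hv' u huk
    rw [hsv] at h1 h2
    simp only [u.isLt, if_true, Set.mem_Ioc] at h1 h2
    have hle : Real.exp ((W v u : ℝ) + 1) ≤ Real.exp (W v' u) := by
      apply Real.exp_le_exp.2
      have : W v (u : ℕ) + 1 ≤ W v' (u : ℕ) := hlt
      exact_mod_cast this
    linarith [h1.2, h2.1, hle]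
  have hdisj : Pairwise (Function.onFun Disjoint E) := by
    intro v v' hne
    obtain ⟨u, hu⟩ := Function.ne_iff.1 hne
    have hWu : W v u ≠ W v' u := by
      rw [hW]
      simp only [u.isLt, dif_pos]
      intro h
      exact hu (Fin.val_injective (by simpa using h))
    rcases lt_or_gt_of_ne hWu with h | h
    · exact claim v v' u h
    · exact (claim v' v u h).symm
  -- measure of each E v
  have hc1pos : 0 < c₁ := by
    rw [hc₁]
    have h2 : Real.exp (-α) < 1 := Real.exp_lt_one_iff.2 (by linarith)
    have h3 := Real.exp_pos (-1 : ℝ)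
    nlinarith
  have hEv : ∀ v, ENNReal.ofReal (c₁ ^ q / 2 * x ^ (-α)) ≤ P (E v) := by
    intro v
    rw [hE]
    simp only
    rw [block_prod hk0 hindep i (sv v) (hsv_meas v),
      show Finset.range k = Finset.range (q + 1) from by rw [hkq],
      Finset.prod_range_succ]
    have hioc : ∀ t, t < q → ENNReal.ofReal (c₁ * Real.exp (-(α * W v t)))
        ≤ P (M (k * i + t) ⁻¹' sv v t) := by
      intro t ht
      have := ioc_bound hα (hmeas (k * i + t)) (hfrechet (k * i + t)) (W v t)
      rw [hsv]
      simp only [ht, if_true]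
      exact this
    have hioi : ENNReal.ofReal ((x * Real.exp (-Sv v)) ^ (-α) / 2)
        ≤ P (M (k * i + q) ⁻¹' sv v q) := by
      have := ioi_bound hα (hmeas (k * i + q)) (hfrechet (k * i + q)) (hy1 v)
      rw [hsv]
      simpa only [lt_self_iff_false, if_false] using this
    have hprodle : ENNReal.ofReal (∏ t ∈ Finset.range q, (c₁ * Real.exp (-(α * W v t))))
        ≤ ∏ t ∈ Finset.range q, P (M (k * i + t) ⁻¹' sv v t) := by
      rw [ENNReal.ofReal_prod_of_nonneg]
      · exact Finset.prod_le_prod' fun t ht => hioc t (Finset.mem_range.1 ht)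
      · exact fun t _ => mul_nonneg hc1pos.le (Real.exp_pos _).le
    have hmulle : ENNReal.ofReal ((∏ t ∈ Finset.range q, (c₁ * Real.exp (-(α * W v t))))
          * ((x * Real.exp (-Sv v)) ^ (-α) / 2))
        ≤ (∏ t ∈ Finset.range q, P (M (k * i + t) ⁻¹' sv v t))
          * P (M (k * i + q) ⁻¹' sv v q) := by
      rw [ENNReal.ofReal_mul (Finset.prod_nonneg fun t _ =>
        mul_nonneg hc1pos.le (Real.exp_pos _).le)]
      exact mul_le_mul' hprodle hioi
    refine le_trans (le_of_eq ?_) hmulle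
    congr 1
    have hexp : (∏ t ∈ Finset.range q, (c₁ * Real.exp (-(α * W v t))))
        = c₁ ^ q * Real.exp (-(α * Sv v)) := by
      rw [Finset.prod_mul_distrib, Finset.prod_const, Finset.card_range, ← Real.exp_sum]
      congr 1
      rw [hSv, Finset.mul_sum, ← Finset.sum_neg_distrib]
    have hyx : (x * Real.exp (-Sv v)) ^ (-α) = x ^ (-α) * Real.exp (α * Sv v) := by
      rw [Real.mul_rpow hx0.le (Real.exp_pos _).le, exp_rpow']
      congr 1
      ring
    rw [hexp, hyx]
    have hee : Real.exp (-(α * Sv v)) * Real.exp (α * Sv v) = 1 := by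
      rw [← Real.exp_add, neg_add_cancel, Real.exp_zero]
    calc c₁ ^ q / 2 * x ^ (-α)
        = c₁ ^ q * (x ^ (-α) / 2) * 1 := by ring
      _ = c₁ ^ q * (x ^ (-α) / 2) * (Real.exp (-(α * Sv v)) * Real.exp (α * Sv v)) := by
          rw [hee]
      _ = c₁ ^ q * Real.exp (-(α * Sv v)) * (x ^ (-α) * Real.exp (α * Sv v) / 2) := by ring
  -- sum up
  have hcard : (Finset.univ : Finset (Fin q → Fin n)).card = n ^ q := by
    rw [Finset.card_univ, Fintype.card_fun]
    simp
  have hunion : ENNReal.ofReal (c₁ ^ q / 2 * x ^ (-α) * (n : ℝ) ^ q) ≤ P (⋃ v, E v) := by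
    rw [measure_iUnion hdisj hE_meas, tsum_fintype]
    calc ENNReal.ofReal (c₁ ^ q / 2 * x ^ (-α) * (n : ℝ) ^ q)
        = (n ^ q : ℕ) * ENNReal.ofReal (c₁ ^ q / 2 * x ^ (-α)) := by
          rw [← ENNReal.ofReal_natCast (n ^ q), ← ENNReal.ofReal_mul (by positivity)]
          congr 1
          push_cast
          ring
      _ = ∑ _v : Fin q → Fin n, ENNReal.ofReal (c₁ ^ q / 2 * x ^ (-α)) := by
          rw [Finset.sum_const, hcard, nsmul_eq_mul]
      _ ≤ ∑ v, P (E v) := Finset.sum_le_sum fun v _ => hEv v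
  exact le_trans hunion (measure_mono (Set.iUnion_subset hsub))

end MainBound

theorem stmt14 {Ω : Type*} [MeasurableSpace Ω] (P : Measure Ω) [IsProbabilityMeasure P]
    (α : ℝ) (hα : 0 < α) (k : ℕ) (hk : 2 ≤ k)
    (a : ℕ → ℝ) (ha : ∀ i, 0 < a i ∧ a i < 1)
    (hsum : Summable (fun i => a i ^ k))
    (hdiv : ¬ Summable (fun i => a i ^ k * |Real.log (a i)| ^ (k - 1)))
    (M : ℕ → Ω → ℝ) (hmeas : ∀ i, Measurable (M i))
    (hindep : iIndepFun M P)
    (hfrechet : ∀ i, ∀ x : ℝ, 0 < x →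
      P {ω | M i ω ≤ x} = ENNReal.ofReal (Real.exp (-(x ^ (-α))))) :
    ∀ᵐ ω ∂P, ¬ BddAbove (Set.range fun i : ℕ =>
      a i ^ ((k : ℝ) / α) * ∏ t ∈ Finset.range k, M (k * i + t) ω) := by
  classical
  set q := k - 1 with hqdef
  have hkq : k = q + 1 := by omega
  have hq : 1 ≤ q := by omega
  have hk0 : 0 < k := by omega
  set c₁ : ℝ := Real.exp (-1) * (1 - Real.exp (-α)) with hc₁
  have hc1pos : 0 < c₁ := by
    rw [hc₁]
    have h2 : Real.exp (-α) < 1 := Real.exp_lt_one_iff.2 (by linarith)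
    have h3 := Real.exp_pos (-1 : ℝ)
    nlinarith
  clear_value c₁
  have ha0 : ∀ i, 0 < a i := fun i => (ha i).1
  have ha1 : ∀ i, a i < 1 := fun i => (ha i).2
  have hiIndep : iIndep (mBlock k M) P := iIndep_mBlock hk0 hmeas hindep
  set Pr : ℕ → Ω → ℝ := fun i ω => ∏ t ∈ Finset.range k, M (k * i + t) ω with hPr
  have hPr_meas : ∀ i, Measurable (Pr i) :=
    fun i => Finset.measurable_prod _ (fun t _ => hmeas _)
  have hPr_mB : ∀ i, Measurable[mBlock k M i] (Pr i) := fun i =>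
    Finset.measurable_prod _ (fun t ht => measurable_mBlock i (Finset.mem_range.1 ht))
  have hlog_large : ∀ T : ℝ, 0 < T → ∀ᶠ i in atTop, T ≤ |Real.log (a i)| := by
    intro T hT
    have htend : Filter.Tendsto (fun i => a i ^ k) atTop (nhds 0) := hsum.tendsto_atTop_zero
    have hev : ∀ᶠ i in atTop, a i ^ k < (Real.exp (-T)) ^ k :=
      htend.eventually (eventually_lt_nhds (by positivity))
    filter_upwards [hev] with i hi
    have hai : a i < Real.exp (-T) := by
      by_contra h
      push_neg at h
      exact absurd (pow_le_pow_left₀ (Real.exp_pos _).le h k) (not_le.2 hi)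
    have hlog : Real.log (a i) < -T := by
      have := Real.log_lt_log (ha0 i) hai
      rwa [Real.log_exp] at this
    rw [abs_of_neg (Real.log_neg (ha0 i) (ha1 i))]
    linarith
  have hnull : ∀ m0 : ℕ,
      P {ω | ∀ i, Pr i ω ≤ ((m0 : ℝ) + 1) * a i ^ (-((k : ℝ) / α))} = 0 := by
    intro m0
    set r : ℝ := (m0 : ℝ) + 1 with hrdef
    have hr1 : 1 ≤ r := by rw [hrdef]; linarith [Nat.cast_nonneg (α := ℝ) m0]
    have hr0 : 0 < r := by linarith
    set x : ℕ → ℝ := fun i => r * a i ^ (-((k : ℝ) / α)) with hx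
    have hx1 : ∀ i, 1 ≤ x i := by
      intro i
      rw [hx]
      have h1 : 1 ≤ a i ^ (-((k : ℝ) / α)) :=
        Real.one_le_rpow_of_pos_of_le_one_of_nonpos (ha0 i) (ha1 i).le
          (neg_nonpos.2 (by positivity))
      nlinarith
    have hx0 : ∀ i, 0 < x i := fun i => lt_of_lt_of_le one_pos (hx1 i)
    set A : ℕ → Set Ω := fun i => {ω | x i < Pr i ω} with hA
    set D : ℕ → Set Ω := fun i => {ω | Pr i ω ≤ x i} with hD
    have hDA : ∀ i, D i = (A i)ᶜ := by
      intro i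
      rw [hA, hD]
      ext ω
      simp [not_lt]
    have hA_meas : ∀ i, MeasurableSet (A i) := fun i => (hPr_meas i) measurableSet_Ioi
    have hD_mB : ∀ i, MeasurableSet[mBlock k M i] (D i) := fun i =>
      (hPr_mB i) measurableSet_Iic
    set ri : ℕ → ℝ := fun i => (P (A i)).toReal with hri
    have hri0 : ∀ i, 0 ≤ ri i := fun i => ENNReal.toReal_nonneg
    have hlogx : ∀ i, Real.log (x i) = Real.log r + ((k : ℝ) / α) * |Real.log (a i)| := by
      intro i
      rw [hx]
      have h1 : a i ^ (-((k : ℝ) / α)) ≠ 0 := (Real.rpow_pos_of_pos (ha0 i) _).ne'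
      rw [Real.log_mul hr0.ne' h1, Real.log_rpow (ha0 i),
        abs_of_neg (Real.log_neg (ha0 i) (ha1 i))]
      ring
    have hxpow : ∀ i, x i ^ (-α) = r ^ (-α) * a i ^ k := by
      intro i
      rw [hx, Real.mul_rpow hr0.le (Real.rpow_pos_of_pos (ha0 i) _).le,
        ← Real.rpow_natCast (a i) k, ← Real.rpow_mul (ha0 i).le]
      congr 2
      field_simp
    set C : ℝ := c₁ ^ q / 2 * r ^ (-α) * ((k : ℝ) / (2 * q * α)) ^ q with hC
    have hCpos : 0 < C := by
      rw [hC]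
      have h1 : (0 : ℝ) < r ^ (-α) := Real.rpow_pos_of_pos hr0 _
      have h2 : (0 : ℝ) < c₁ ^ q := pow_pos hc1pos q
      have h3 : (0 : ℝ) < ((k : ℝ) / (2 * q * α)) ^ q := by positivity
      positivity
    have hq0' : (0 : ℝ) < q := by exact_mod_cast hq
    have hk0' : (0 : ℝ) < k := by exact_mod_cast hk0
    have hev : ∀ᶠ i in atTop, C * (a i ^ k * |Real.log (a i)| ^ q) ≤ ri i := by
      have hTpos : 0 < 2 * (q : ℝ) * α / k :=
        div_pos (mul_pos (mul_pos two_pos hq0') hα) hk0'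
      filter_upwards [hlog_large _ hTpos] with i hT
      set L : ℝ := Real.log (x i) with hL
      set n : ℕ := ⌊L / q⌋₊ with hn
      have hq0 : (0 : ℝ) < q := by exact_mod_cast hq
      have hLge : ((k : ℝ) / α) * |Real.log (a i)| ≤ L := by
        rw [hL, hlogx i]
        have := Real.log_nonneg hr1
        linarith
      have hL2q : 2 * (q : ℝ) ≤ L := by
        have h1 : ((k : ℝ) / α) * (2 * (q : ℝ) * α / k) ≤ ((k : ℝ) / α) * |Real.log (a i)| :=
          mul_le_mul_of_nonneg_left hT (by positivity)
        have h2 : ((k : ℝ) / α) * (2 * (q : ℝ) * α / k) = 2 * q := by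
          field_simp
        linarith
      have hn_le : (q : ℝ) * n ≤ L := by
        have h1 : (n : ℝ) ≤ L / q := Nat.floor_le (div_nonneg (by nlinarith) hq0.le)
        calc (q : ℝ) * n ≤ q * (L / q) := mul_le_mul_of_nonneg_left h1 hq0.le
          _ = L := by field_simp
      have hn_ge : L / (2 * q) ≤ (n : ℝ) := by
        have h1 : L / q - 1 < (n : ℝ) := Nat.sub_one_lt_floor _
        have h2 : L / (2 * q) ≤ L / q - 1 := by
          rw [div_sub' hq0.ne', div_le_div_iff₀ (by positivity) hq0]
          nlinarith
        linarith
      have hmain := main_bound hα hkq hq hmeas hindep hfrechet i n (hx1 i) hn_le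
      have hb := (ENNReal.ofReal_le_iff_le_toReal (measure_ne_top P _)).1 hmain
      have hAB : C * (a i ^ k * |Real.log (a i)| ^ q)
          ≤ c₁ ^ q / 2 * x i ^ (-α) * (n : ℝ) ^ q := by
        have e2 : ((k : ℝ) / (2 * q * α)) * |Real.log (a i)| ≤ (n : ℝ) := by
          have he : ((k : ℝ) / (2 * q * α)) * |Real.log (a i)|
              = (((k : ℝ) / α) * |Real.log (a i)|) / (2 * q) := by ring
          have h3 : (((k : ℝ) / α) * |Real.log (a i)|) / (2 * q) ≤ L / (2 * q) := by
            gcongr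
          rw [he]
          linarith
        have e3 : (((k : ℝ) / (2 * q * α)) * |Real.log (a i)|) ^ q ≤ (n : ℝ) ^ q :=
          pow_le_pow_left₀ (by positivity) e2 q
        have hfac : 0 ≤ c₁ ^ q / 2 * (r ^ (-α) * a i ^ k) :=
          mul_nonneg (div_nonneg (pow_nonneg hc1pos.le q) (by norm_num))
            (mul_nonneg (Real.rpow_pos_of_pos hr0 _).le (pow_nonneg (ha0 i).le k))
        calc C * (a i ^ k * |Real.log (a i)| ^ q)
            = c₁ ^ q / 2 * (r ^ (-α) * a i ^ k)
              * (((k : ℝ) / (2 * q * α)) * |Real.log (a i)|) ^ q := by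
              rw [mul_pow, hC]; ring
          _ ≤ c₁ ^ q / 2 * (r ^ (-α) * a i ^ k) * (n : ℝ) ^ q :=
              mul_le_mul_of_nonneg_left e3 hfac
          _ = c₁ ^ q / 2 * x i ^ (-α) * (n : ℝ) ^ q := by rw [hxpow i]; try ring
      rw [← hc₁] at hb
      exact le_trans hAB hb
    have hnotsum : ¬ Summable ri := by
      intro hS
      obtain ⟨N, hN⟩ := Filter.eventually_atTop.1 hev
      have h1 : Summable (fun j => ri (j + N)) := (summable_nat_add_iff N).2 hS
      have h2 : Summable (fun j => C * (a (j + N) ^ k * |Real.log (a (j + N))| ^ q)) :=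
        Summable.of_nonneg_of_le (fun j => mul_nonneg hCpos.le
            (mul_nonneg (pow_nonneg (ha0 _).le k) (pow_nonneg (abs_nonneg _) q)))
          (fun j => hN (j + N) (by omega)) h1
      have h3 : Summable (fun j => a (j + N) ^ k * |Real.log (a (j + N))| ^ q) :=
        (summable_mul_left_iff hCpos.ne').1 h2
      exact hdiv ((summable_nat_add_iff N).1 h3)
    have htends : Filter.Tendsto (fun N => ∑ i ∈ Finset.range N, ri i) atTop atTop :=
      (not_summable_iff_tendsto_nat_atTop_of_nonneg hri0).1 hnotsum
    have hstep : ∀ i, P (D i) ≤ ENNReal.ofReal (Real.exp (-(ri i))) := by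
      intro i
      rw [hDA i, prob_compl_eq_one_sub (hA_meas i)]
      have h1 : P (A i) = ENNReal.ofReal (ri i) :=
        (ENNReal.ofReal_toReal (measure_ne_top P _)).symm
      rw [h1, ← ENNReal.ofReal_one, ← ENNReal.ofReal_sub _ (hri0 i)]
      exact ENNReal.ofReal_le_ofReal (by linarith [Real.add_one_le_exp (-(ri i))])
    have hprodN : ∀ N, P (⋂ i, D i)
        ≤ ENNReal.ofReal (Real.exp (-(∑ i ∈ Finset.range N, ri i))) := by
      intro N
      calc P (⋂ i, D i) ≤ P (⋂ i ∈ Finset.range N, D i) :=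
            measure_mono (Set.subset_iInter₂ fun i _ => Set.iInter_subset D i)
        _ = ∏ i ∈ Finset.range N, P (D i) := hiIndep.meas_biInter (fun i _ => hD_mB i)
        _ ≤ ∏ i ∈ Finset.range N, ENNReal.ofReal (Real.exp (-(ri i))) :=
            Finset.prod_le_prod' fun i _ => hstep i
        _ = ENNReal.ofReal (∏ i ∈ Finset.range N, Real.exp (-(ri i))) :=
            (ENNReal.ofReal_prod_of_nonneg (fun i _ => (Real.exp_pos _).le)).symm
        _ = ENNReal.ofReal (Real.exp (-(∑ i ∈ Finset.range N, ri i))) := by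
            rw [← Real.exp_sum]
            congr 1
            rw [Finset.sum_neg_distrib]
    have hzero : P (⋂ i, D i) = 0 := by
      have h0 : Filter.Tendsto
          (fun N => ENNReal.ofReal (Real.exp (-(∑ i ∈ Finset.range N, ri i))))
          atTop (nhds 0) := by
        rw [← ENNReal.ofReal_zero]
        apply ENNReal.tendsto_ofReal
        exact Real.tendsto_exp_atBot.comp (tendsto_neg_atTop_atBot.comp htends)
      have hle0 : P (⋂ i, D i) ≤ 0 := ge_of_tendsto' h0 (fun N => hprodN N)
      exact le_antisymm hle0 zero_le
    have hsetid : {ω | ∀ i, Pr i ω ≤ ((m0 : ℝ) + 1) * a i ^ (-((k : ℝ) / α))}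
        = ⋂ i, D i := by
      ext ω
      simp only [Set.mem_iInter, Set.mem_setOf_eq]
      exact Iff.rfl
    rw [hsetid]
    exact hzero
  rw [ae_iff]
  refine measure_mono_null ?_ (measure_iUnion_null fun m0 => hnull m0)
  intro ω hω
  simp only [Set.mem_setOf_eq, not_not] at hω
  obtain ⟨c, hc⟩ := hω
  obtain ⟨m0, hm0⟩ := exists_nat_ge c
  refine Set.mem_iUnion.2 ⟨m0, fun i => ?_⟩
  have h1 : a i ^ ((k : ℝ) / α) * Pr i ω ≤ c := hc (Set.mem_range_self i)
  have hb : (0 : ℝ) < a i ^ ((k : ℝ) / α) := Real.rpow_pos_of_pos (ha0 i) _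
  have h2 : a i ^ ((k : ℝ) / α) * Pr i ω ≤ (m0 : ℝ) + 1 := by linarith
  have hinv : a i ^ (-((k : ℝ) / α)) = (a i ^ ((k : ℝ) / α))⁻¹ := by
    rw [Real.rpow_neg (ha0 i).le]
  calc Pr i ω = (a i ^ ((k : ℝ) / α))⁻¹ * (a i ^ ((k : ℝ) / α) * Pr i ω) := by
        field_simp
    _ ≤ (a i ^ ((k : ℝ) / α))⁻¹ * ((m0 : ℝ) + 1) :=
        mul_le_mul_of_nonneg_left h2 (inv_nonneg.2 hb.le)
    _ = ((m0 : ℝ) + 1) * a i ^ (-((k : ℝ) / α)) := by rw [hinv]; ring
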